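/- In a commutative unital quantale, if a ∨ b = 1 and a·b = 0 then both a and b are complemented elements; moreover for any complemented e, a ∧ e = a·e and e → a = e^⊥ ∨ a. -/
import Mathlib


open CompleteLattice

/-- A commutative unital quantale: a complete lattice with a commutative monoid
multiplication distributing over arbitrary joins, whose unit is the top element. -/
class CommQuantale (A : Type*) extends CompleteLattice A, CommMonoid A where
  one_eq_top : (1 : A) = ⊤
  mul_sSup : ∀ (a : A) (S : Set A), a * sSup S = ⨆ b ∈ S, a * b

namespace CommQuantale

variable {A : Type*} [CommQuantale A]

/-- A coherent quantale: algebraic, with `1 = ⊤` compact and compacts closed under `*`. -/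
def Coherent (A : Type*) [CommQuantale A] : Prop :=
  (∀ a : A, a = sSup {c : A | IsCompactElement c ∧ c ≤ a}) ∧
  IsCompactElement (⊤ : A) ∧
  ∀ c d : A, IsCompactElement c → IsCompactElement d → IsCompactElement (c * d)

/-- m-prime element. -/
def MPrime (p : A) : Prop :=
  p < ⊤ ∧ ∀ a b : A, a * b ≤ p → a ≤ p ∨ b ≤ p

/-- The radical of an element. -/
def rad (a : A) : A := sInf {p : A | MPrime p ∧ a ≤ p}

/-- Maximal element of `A \ {1}`. -/
def MaxElem (m : A) : Prop := m < ⊤ ∧ ∀ x : A, m ≤ x → x < ⊤ → x = m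

/-- Radical element. -/
def RadElem (a : A) : Prop := rad a = a

/-- Residuation `a → b`. -/
def res (a b : A) : A := sSup {x : A | a * x ≤ b}

/-- Complemented element (member of the Boolean center `B(A)`). -/
def Complemented (e : A) : Prop := ∃ f : A, e ⊔ f = ⊤ ∧ e ⊓ f = ⊥

end CommQuantale

open CommQuantale

namespace CommQuantale

variable {A : Type*} [CommQuantale A]

lemma mul_sup' (a b c : A) : a * (b ⊔ c) = a * b ⊔ a * c := by
  rw [← sSup_pair, mul_sSup]
  rw [iSup_pair]

lemma mul_mono' {b c : A} (a : A) (h : b ≤ c) : a * b ≤ a * c := by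
  have : a * c = a * b ⊔ a * c := by rw [← mul_sup', sup_eq_right.mpr h]
  rw [this]; exact le_sup_left

lemma mul_le_left' (a b : A) : a * b ≤ a := by
  calc a * b ≤ a * 1 := mul_mono' a (by rw [one_eq_top]; exact le_top)
    _ = a := mul_one a

lemma mul_le_inf' (a b : A) : a * b ≤ a ⊓ b := by
  refine le_inf (mul_le_left' a b) ?_
  rw [mul_comm]; exact mul_le_left' b a

lemma mul_res_le' (e a : A) : e * res e a ≤ a := by
  rw [res, mul_sSup]
  exact iSup₂_le fun x hx => hx

lemma le_res' {e a x : A} (h : e * x ≤ a) : x ≤ res e a := le_sSup h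

end CommQuantale

theorem stmt15 {A : Type*} [CommQuantale A] :
    (∀ a b : A, a ⊔ b = 1 → a * b = ⊥ → Complemented a ∧ Complemented b) ∧
    (∀ a e : A, Complemented e → a ⊓ e = a * e ∧ res e a = res e ⊥ ⊔ a) := by
  have key : ∀ a e f : A, e ⊔ f = ⊤ → e ⊓ f = ⊥ → a ⊓ e = a * e := by
    intro a e f hsup hinf
    refine le_antisymm ?_ (le_trans (mul_le_inf' a e) (by rw [inf_comm]))
    have h1 : a ⊓ e = (a ⊓ e) * (e ⊔ f) := by rw [hsup, ← one_eq_top, mul_one]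
    rw [h1, mul_sup']
    refine sup_le ?_ ?_
    · rw [mul_comm]
      exact le_trans (mul_mono' e inf_le_left) (le_of_eq (mul_comm e a))
    · have : (a ⊓ e) * f ≤ e * f := by rw [mul_comm, mul_comm e f]; exact mul_mono' f inf_le_right
      refine le_trans (le_trans this (mul_le_inf' e f)) ?_
      rw [hinf]; exact bot_le
  constructor
  · intro a b hsup hbot
    have hsup' : a ⊔ b = ⊤ := by rw [hsup, one_eq_top]
    have hinf : a ⊓ b = ⊥ := by
      refine le_antisymm ?_ bot_le
      have h1 : a ⊓ b = (a ⊓ b) * (a ⊔ b) := by rw [hsup', ← one_eq_top, mul_one]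
      rw [h1, mul_sup']
      refine sup_le ?_ ?_
      · have : (a ⊓ b) * a ≤ b * a := by
          rw [mul_comm, mul_comm b a]; exact mul_mono' a inf_le_right
        rw [mul_comm b a] at this
        exact le_trans this (le_of_eq hbot)
      · have : (a ⊓ b) * b ≤ a * b := by
          rw [mul_comm, mul_comm a b]; exact mul_mono' b inf_le_left
        exact le_trans this (le_of_eq hbot)
    exact ⟨⟨b, hsup', hinf⟩, ⟨a, by rw [sup_comm]; exact hsup', by rw [inf_comm]; exact hinf⟩⟩
  · intro a e ⟨f, hsup, hinf⟩
    refine ⟨key a e f hsup hinf, ?_⟩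
    refine le_antisymm ?_ ?_
    · have h1 : res e a = res e a * (e ⊔ f) := by rw [hsup, ← one_eq_top, mul_one]
      rw [h1, mul_sup']
      refine sup_le ?_ ?_
      · refine le_trans ?_ le_sup_right
        rw [mul_comm]; exact mul_res_le' e a
      · refine le_trans ?_ le_sup_left
        apply le_res'
        have : e * (res e a * f) ≤ e * f := by
          rw [mul_comm (res e a) f, ← mul_assoc]
          exact mul_le_left' (e * f) (res e a)
        refine le_trans this ?_
        rw [← hinf]; exact mul_le_inf' e f
    · refine sup_le ?_ ?_
      · apply le_res'
        exact le_trans (mul_res_le' e ⊥) bot_le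
      · apply le_res'
        rw [mul_comm]; exact mul_le_left' a e
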